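/- arXiv:2005.05195 — 8 statements merged into one kernel-verified Lean document; each statement's English description precedes it below -/
import Mathlib

section
/- Let p ≥ 1 and 1 ≤ k ≤ p. The optimal value of sparse PCA equals the optimal value of its mixed-integer semidefinite reformulation; precisely, sup { xᵀΣx : x ∈ ℝ^p, ‖x‖₂ = 1, ‖x‖₀ ≤ k } = sup { ⟨Σ, X⟩ : X ∈ ℝ^{p×p}, X ⪰ 0, tr(X) = 1, and there exists z ∈ {0,1}^p with ∑_{i=1}^p z_i ≤ k such that |X_{i,j}| ≤ M_{i,j} z_i for all i,j ∈ [p] and ∑_{j=1}^p |X_{i,j}| ≤ √k · z_i for all i ∈ [p] }, where M_{i,i} = 1 and M_{i,j} = 1/2 for i ≠ j. -/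
open Finset
open scoped Matrix

/-- Cauchy–Schwarz step: a unit vector with at most `k` nonzeros has ℓ¹ norm ≤ √k. -/
lemma aux_l1_le_sqrt {p k : ℕ} (x : Fin p → ℝ)
    (h1 : (∑ i, x i ^ 2) = 1)
    (h2 : (Finset.univ.filter (fun i => x i ≠ 0)).card ≤ k) :
    ∑ j, |x j| ≤ Real.sqrt k := by
  set s := Finset.univ.filter (fun i => x i ≠ 0) with hs
  have hsum : ∑ j, |x j| = ∑ j ∈ s, |x j| := by
    rw [Finset.sum_filter_of_ne]
    intro j _ hj
    simp only [ne_eq]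
    intro h; exact hj (by simp [h])
  have hcs := Finset.sum_mul_sq_le_sq_mul_sq s (fun _ => (1 : ℝ)) (fun j => |x j|)
  simp only [one_mul, one_pow, Finset.sum_const, nsmul_eq_mul, mul_one, sq_abs] at hcs
  have hle1 : ∑ j ∈ s, x j ^ 2 ≤ 1 := by
    rw [← h1]
    exact Finset.sum_le_sum_of_subset_of_nonneg (Finset.subset_univ s)
      (fun j _ _ => sq_nonneg (x j))
  have hk : (∑ j ∈ s, |x j|) ^ 2 ≤ (k : ℝ) := by
    calc (∑ j ∈ s, |x j|) ^ 2 ≤ (s.card : ℝ) * ∑ j ∈ s, x j ^ 2 := hcs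
      _ ≤ (k : ℝ) * 1 := by
          apply mul_le_mul (by exact_mod_cast h2) hle1
            (Finset.sum_nonneg fun j _ => sq_nonneg _) (by positivity)
      _ = k := mul_one _
  rw [hsum]
  exact Real.le_sqrt_of_sq_le hk

/-- The optimal value of sparse PCA equals the optimal value of its
mixed-integer semidefinite reformulation. -/
theorem sparsePCA_eq_misdo (p k : ℕ) (hp : 1 ≤ p) (hk1 : 1 ≤ k) (hkp : k ≤ p)
    (S : Matrix (Fin p) (Fin p) ℝ) (hS : S.PosSemidef) :
    sSup {v : ℝ | ∃ x : Fin p → ℝ,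
        (∑ i, x i ^ 2) = 1 ∧
        (Finset.univ.filter (fun i => x i ≠ 0)).card ≤ k ∧
        v = ∑ i, ∑ j, x i * S i j * x j} =
    sSup {v : ℝ | ∃ (X : Matrix (Fin p) (Fin p) ℝ) (z : Fin p → ℝ),
        X.PosSemidef ∧ X.trace = 1 ∧
        (∀ i, z i = 0 ∨ z i = 1) ∧ (∑ i, z i) ≤ (k : ℝ) ∧
        (∀ i j, |X i j| ≤ (if i = j then (1 : ℝ) else 1 / 2) * z i) ∧
        (∀ i, ∑ j, |X i j| ≤ Real.sqrt k * z i) ∧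
        v = ∑ i, ∑ j, S i j * X i j} := by
  classical
  set A := {v : ℝ | ∃ x : Fin p → ℝ,
        (∑ i, x i ^ 2) = 1 ∧
        (Finset.univ.filter (fun i => x i ≠ 0)).card ≤ k ∧
        v = ∑ i, ∑ j, x i * S i j * x j} with hAdef
  set B := {v : ℝ | ∃ (X : Matrix (Fin p) (Fin p) ℝ) (z : Fin p → ℝ),
        X.PosSemidef ∧ X.trace = 1 ∧
        (∀ i, z i = 0 ∨ z i = 1) ∧ (∑ i, z i) ≤ (k : ℝ) ∧
        (∀ i j, |X i j| ≤ (if i = j then (1 : ℝ) else 1 / 2) * z i) ∧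
        (∀ i, ∑ j, |X i j| ≤ Real.sqrt k * z i) ∧
        v = ∑ i, ∑ j, S i j * X i j} with hBdef
  set C : ℝ := ∑ i, ∑ j, |S i j| with hC
  -- A is bounded above by C
  have bddA : ∀ v ∈ A, v ≤ C := by
    intro v hv
    obtain ⟨x, h1, _, rfl⟩ := hv
    have hx1 : ∀ i, |x i| ≤ 1 := by
      intro i
      have h : x i ^ 2 ≤ 1 := by
        rw [← h1]
        exact Finset.single_le_sum (fun j _ => sq_nonneg (x j)) (Finset.mem_univ i)
      nlinarith [abs_nonneg (x i), sq_abs (x i)]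
    refine Finset.sum_le_sum fun i _ => Finset.sum_le_sum fun j _ => ?_
    calc x i * S i j * x j ≤ |x i * S i j * x j| := le_abs_self _
      _ = |x i| * |S i j| * |x j| := by rw [abs_mul, abs_mul]
      _ ≤ 1 * |S i j| * 1 := by
          apply mul_le_mul (mul_le_mul (hx1 i) le_rfl (abs_nonneg _) zero_le_one)
            (hx1 j) (abs_nonneg _) (by positivity)
      _ = |S i j| := by ring
  have bddA' : BddAbove A := ⟨C, bddA⟩
  -- B is bounded above by C
  have bddB : ∀ v ∈ B, v ≤ C := by
    intro v hv
    obtain ⟨X, z, _, _, hz01, _, hM, _, rfl⟩ := hv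
    have hX1 : ∀ i j, |X i j| ≤ 1 := by
      intro i j
      have hzi : 0 ≤ z i ∧ z i ≤ 1 := by rcases hz01 i with h | h <;> simp [h]
      have hcoef : (if i = j then (1 : ℝ) else 1 / 2) ≤ 1 := by split <;> norm_num
      have hcoef0 : (0 : ℝ) ≤ (if i = j then (1 : ℝ) else 1 / 2) := by split <;> norm_num
      calc |X i j| ≤ (if i = j then (1 : ℝ) else 1 / 2) * z i := hM i j
        _ ≤ 1 * 1 := mul_le_mul hcoef hzi.2 hzi.1 zero_le_one
        _ = 1 := mul_one 1
    refine Finset.sum_le_sum fun i _ => Finset.sum_le_sum fun j _ => ?_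
    calc S i j * X i j ≤ |S i j * X i j| := le_abs_self _
      _ = |S i j| * |X i j| := abs_mul _ _
      _ ≤ |S i j| * 1 := mul_le_mul_of_nonneg_left (hX1 i j) (abs_nonneg _)
      _ = |S i j| := mul_one _
  have bddB' : BddAbove B := ⟨C, bddB⟩
  -- A is nonempty
  have neA : A.Nonempty := by
    set x : Fin p → ℝ := fun i => if i = ⟨0, hp⟩ then 1 else 0 with hx
    refine ⟨∑ i, ∑ j, x i * S i j * x j, x, ?_, ?_, rfl⟩
    · simp [hx, Finset.sum_ite_eq']
    · have hsub : (Finset.univ.filter (fun i => x i ≠ 0)) ⊆ {(⟨0, hp⟩ : Fin p)} := by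
        intro i hi
        rw [Finset.mem_filter] at hi
        rw [Finset.mem_singleton]
        by_contra hne
        apply hi.2
        rw [hx]
        simp only [if_neg hne]
      calc (Finset.univ.filter (fun i => x i ≠ 0)).card ≤ ({⟨0, hp⟩} : Finset (Fin p)).card :=
            Finset.card_le_card hsub
        _ = 1 := Finset.card_singleton _
        _ ≤ k := hk1
  -- A ⊆ B
  have hAB : A ⊆ B := by
    intro v hv
    obtain ⟨x, h1, h2, rfl⟩ := hv
    set X : Matrix (Fin p) (Fin p) ℝ := Matrix.of fun i j => x i * x j with hX
    set z : Fin p → ℝ := fun i => if x i = 0 then 0 else 1 with hz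
    have hXij : ∀ i j, X i j = x i * x j := fun _ _ => rfl
    have hsq : ∀ i, x i ^ 2 ≤ 1 := by
      intro i
      rw [← h1]
      exact Finset.single_le_sum (fun j _ => sq_nonneg (x j)) (Finset.mem_univ i)
    refine ⟨X, z, ?_, ?_, ?_, ?_, ?_, ?_, ?_⟩
    · rw [Matrix.posSemidef_iff_dotProduct_mulVec]; constructor
      · ext i j
        simp [Matrix.conjTranspose_apply, hXij, mul_comm]
      · intro y
        have key : dotProduct (star y) (X *ᵥ y) = (∑ j, x j * y j) ^ 2 := by
          simp only [dotProduct, Matrix.mulVec, Pi.star_apply, star_trivial, hXij]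
          calc ∑ i, y i * ∑ j, x i * x j * y j
              = ∑ i, (x i * y i) * ∑ j, x j * y j := by
                refine Finset.sum_congr rfl fun i _ => ?_
                rw [Finset.mul_sum, Finset.mul_sum]
                exact Finset.sum_congr rfl fun j _ => by ring
            _ = (∑ i, x i * y i) * ∑ j, x j * y j := (Finset.sum_mul _ _ _).symm
            _ = (∑ j, x j * y j) ^ 2 := by rw [sq]
        rw [key]
        exact sq_nonneg _
    · simpa [Matrix.trace, Matrix.diag, hXij, ← sq] using h1
    · intro i; by_cases h : x i = 0 <;> simp [hz, h]
    · have hzeq : ∑ i, z i = ((Finset.univ.filter (fun i => x i ≠ 0)).card : ℝ) := by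
        rw [Finset.card_filter]
        push_cast
        apply Finset.sum_congr rfl
        intro i _
        by_cases h : x i = 0 <;> simp [hz, h]
      rw [hzeq]
      exact_mod_cast h2
    · intro i j
      by_cases h : x i = 0
      · simp [hz, h, hXij]
      · simp only [hz, if_neg h, mul_one]
        rcases eq_or_ne i j with rfl | hij
        · simpa [hXij, ← sq, abs_of_nonneg (sq_nonneg (x i))] using hsq i
        · rw [if_neg hij, hXij, abs_mul]
          have hij2 : x i ^ 2 + x j ^ 2 ≤ 1 := by
            rw [← h1]
            have hpair : ({i, j} : Finset (Fin p)).sum (fun l => x l ^ 2)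
                = x i ^ 2 + x j ^ 2 := by
              rw [Finset.sum_insert (by simp [hij]), Finset.sum_singleton]
            rw [← hpair]
            exact Finset.sum_le_sum_of_subset_of_nonneg (Finset.subset_univ _)
              (fun l _ _ => sq_nonneg _)
          nlinarith [sq_nonneg (|x i| - |x j|), sq_abs (x i), sq_abs (x j)]
    · intro i
      by_cases h : x i = 0
      · simp [hz, h, hXij]
      · simp only [hz, if_neg h, mul_one]
        have hxi : |x i| ≤ 1 := by nlinarith [hsq i, abs_nonneg (x i), sq_abs (x i)]
        calc ∑ j, |X i j| = |x i| * ∑ j, |x j| := by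
              simp [hXij, abs_mul, Finset.mul_sum]
          _ ≤ 1 * Real.sqrt k := by
              apply mul_le_mul hxi (aux_l1_le_sqrt x h1 h2)
                (Finset.sum_nonneg fun j _ => abs_nonneg _) zero_le_one
          _ = Real.sqrt k := one_mul _
    · refine Finset.sum_congr rfl fun i _ => Finset.sum_congr rfl fun j _ => ?_
      rw [hXij]; ring
  -- every element of B is at most sSup A
  have hBle : ∀ v ∈ B, v ≤ sSup A := by
    intro v hv
    obtain ⟨X, z, hXpsd, htr, hz01, hzsum, hM, hrow, rfl⟩ := hv
    have hH : X.IsHermitian := hXpsd.1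
    set lam := hH.eigenvalues with hlam
    set u : Fin p → Fin p → ℝ := fun l => ⇑(hH.eigenvectorBasis l) with hu
    have hlamnn : ∀ l, 0 ≤ lam l := fun l => hXpsd.eigenvalues_nonneg l
    have hnorm : ∀ l, ∑ i, u l i ^ 2 = 1 := by
      intro l
      have h := hH.eigenvectorBasis.orthonormal.1 l
      rw [EuclideanSpace.norm_eq] at h
      have h2 := Real.sqrt_eq_one.mp h
      simpa [hu, sq_abs] using h2
    have hentry : ∀ i j, X i j = ∑ l, lam l * u l i * u l j := by
      intro i j
      conv_lhs => rw [hH.spectral_theorem]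
      simp [Matrix.mul_apply, Matrix.diagonal, Matrix.conjTranspose_apply, hu, hlam,
        mul_comm, mul_assoc]
    have hlamsum : ∑ l, lam l = 1 := by
      have htr2 : X.trace = ∑ l, lam l := by
        simp only [Matrix.trace, Matrix.diag]
        calc ∑ i, X i i = ∑ i, ∑ l, lam l * u l i * u l i := by
              simp only [hentry]
          _ = ∑ l, lam l * ∑ i, u l i ^ 2 := by
              rw [Finset.sum_comm]
              refine Finset.sum_congr rfl fun l _ => ?_
              rw [Finset.mul_sum]
              exact Finset.sum_congr rfl fun i _ => by ring
          _ = ∑ l, lam l := by simp [hnorm]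
      rw [← htr2, htr]
    have hvanish : ∀ i, z i = 0 → ∀ j, X i j = 0 := by
      intro i hi j
      have h := hM i j
      rw [hi, mul_zero] at h
      exact abs_eq_zero.mp (le_antisymm h (abs_nonneg _))
    have hsupp : ∀ l, lam l ≠ 0 → ∀ i, z i = 0 → u l i = 0 := by
      intro l hl i hi
      have h := congrFun (hH.mulVec_eigenvectorBasis l) i
      simp only [Matrix.mulVec, dotProduct, Pi.smul_apply, smul_eq_mul] at h
      simp only [hvanish i hi, zero_mul, Finset.sum_const_zero] at h
      have h0 : lam l * u l i = 0 := h.symm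
      exact (mul_eq_zero.mp h0).resolve_left hl
    have hzcard : ((Finset.univ.filter (fun i => z i = 1)).card : ℝ) ≤ (k : ℝ) := by
      calc ((Finset.univ.filter (fun i => z i = 1)).card : ℝ)
          = ∑ i ∈ Finset.univ.filter (fun i => z i = 1), z i := by
            rw [Finset.sum_congr rfl (fun i hi => (Finset.mem_filter.mp hi).2)]
            simp
        _ ≤ ∑ i, z i := Finset.sum_le_sum_of_subset_of_nonneg (Finset.subset_univ _)
            (fun i _ _ => by rcases hz01 i with h | h <;> simp [h])
        _ ≤ k := hzsum
    have hzcardN : (Finset.univ.filter (fun i => z i = 1)).card ≤ k := by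
      exact_mod_cast hzcard
    have hcard : ∀ l, lam l ≠ 0 →
        (Finset.univ.filter (fun i => u l i ≠ 0)).card ≤ k := by
      intro l hl
      have hsub : Finset.univ.filter (fun i => u l i ≠ 0)
          ⊆ Finset.univ.filter (fun i => z i = 1) := by
        intro i hi
        simp only [Finset.mem_filter, Finset.mem_univ, true_and] at *
        rcases hz01 i with h | h
        · exact absurd (hsupp l hl i h) hi
        · exact h
      exact (Finset.card_le_card hsub).trans hzcardN
    have hq : ∀ l, lam l ≠ 0 → (∑ i, ∑ j, u l i * S i j * u l j) ≤ sSup A := by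
      intro l hl
      exact le_csSup bddA' ⟨u l, hnorm l, hcard l hl, rfl⟩
    have hval : ∑ i, ∑ j, S i j * X i j
        = ∑ l, lam l * (∑ i, ∑ j, u l i * S i j * u l j) := by
      calc ∑ i, ∑ j, S i j * X i j
          = ∑ i, ∑ j, ∑ l, lam l * (u l i * S i j * u l j) := by
            refine Finset.sum_congr rfl fun i _ => Finset.sum_congr rfl fun j _ => ?_
            rw [hentry i j, Finset.mul_sum]
            exact Finset.sum_congr rfl fun l _ => by ring
        _ = ∑ i, ∑ l, ∑ j, lam l * (u l i * S i j * u l j) :=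
            Finset.sum_congr rfl fun i _ => Finset.sum_comm
        _ = ∑ l, ∑ i, ∑ j, lam l * (u l i * S i j * u l j) := Finset.sum_comm
        _ = ∑ l, lam l * (∑ i, ∑ j, u l i * S i j * u l j) := by
            refine Finset.sum_congr rfl fun l _ => ?_
            rw [Finset.mul_sum]
            exact Finset.sum_congr rfl fun i _ => (Finset.mul_sum _ _ _).symm
    rw [hval]
    calc ∑ l, lam l * (∑ i, ∑ j, u l i * S i j * u l j)
        ≤ ∑ l, lam l * sSup A := by
          refine Finset.sum_le_sum fun l _ => ?_
          rcases eq_or_ne (lam l) 0 with h | h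
          · simp [h]
          · exact mul_le_mul_of_nonneg_left (hq l h) (hlamnn l)
      _ = sSup A := by rw [← Finset.sum_mul, hlamsum, one_mul]
  have hBne : B.Nonempty := neA.mono hAB
  exact le_antisymm (csSup_le_csSup bddB' neA hAB) (csSup_le hBne hBle)
end

section
/- Let X ∈ ℝ^{p×p} satisfy X ⪰ 0 and tr(X) = 1, and let z ∈ {0,1}^p with ∑_{i=1}^p z_i ≤ k be such that X_{i,j} = 0 whenever z_i = 0. Then there exists x ∈ ℝ^p with ‖x‖₂ = 1, ‖x‖₀ ≤ k, and xᵀΣx ≥ ⟨Σ, X⟩. -/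
/-- From a feasible solution of the MISDO reformulation one can extract a
feasible solution of sparse PCA with at least the same objective value. -/
theorem misdo_to_sparse_feasible (p k : ℕ) (hk1 : 1 ≤ k) (hkp : k ≤ p)
    (S : Matrix (Fin p) (Fin p) ℝ) (hS : S.IsHermitian)
    (X : Matrix (Fin p) (Fin p) ℝ) (hX : X.PosSemidef) (htr : X.trace = 1)
    (z : Fin p → ℝ) (hzbin : ∀ i, z i = 0 ∨ z i = 1)
    (hzk : (∑ i, z i) ≤ (k : ℝ))
    (hsupp : ∀ i j, z i = 0 → X i j = 0) :
    ∃ x : Fin p → ℝ, (∑ i, x i ^ 2) = 1 ∧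
      (Finset.univ.filter (fun i => x i ≠ 0)).card ≤ k ∧
      (∑ i, ∑ j, x i * S i j * x j) ≥ ∑ i, ∑ j, S i j * X i j := by
  classical
  have hH : X.IsHermitian := hX.1
  set μ : Fin p → ℝ := hH.eigenvalues with hμdef
  set v : Fin p → Fin p → ℝ := fun i a => hH.eigenvectorBasis i a with hvdef
  have hμnn : ∀ i, 0 ≤ μ i := fun i => hX.eigenvalues_nonneg i
  -- entrywise spectral decomposition
  have hXe : ∀ a b, X a b = ∑ i, μ i * (v i a * v i b) := by
    intro a b
    conv_lhs => rw [hH.spectral_theorem, Unitary.conjStarAlgAut_apply]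
    rw [Matrix.mul_apply]
    refine Finset.sum_congr rfl fun i _ => ?_
    rw [Matrix.mul_diagonal]
    simp only [Matrix.star_apply, Matrix.IsHermitian.eigenvectorUnitary_apply, star_trivial,
      Function.comp_apply, RCLike.ofReal_real_eq_id, id_eq, hvdef]
    ring
  -- unit norm of eigenvectors
  have hnorm : ∀ i, (∑ a, v i a ^ 2) = 1 := by
    intro i
    have h1 : ‖hH.eigenvectorBasis i‖ = 1 := hH.eigenvectorBasis.orthonormal.1 i
    have h2 : (inner ℝ (hH.eigenvectorBasis i) (hH.eigenvectorBasis i) : ℝ) = 1 := by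
      rw [real_inner_self_eq_norm_sq, h1]; norm_num
    rw [PiLp.inner_apply] at h2
    simp only [RCLike.inner_apply, starRingEnd_apply, star_trivial] at h2
    calc (∑ a, v i a ^ 2) = ∑ a, v i a * v i a := by
          exact Finset.sum_congr rfl fun a _ => sq (v i a) ▸ by ring
      _ = 1 := h2
  -- sum of eigenvalues = 1
  have hsum : (∑ i, μ i) = 1 := by
    have : X.trace = ∑ i, μ i := by
      rw [Matrix.trace]
      simp only [Matrix.diag]
      calc (∑ a, X a a) = ∑ a, ∑ i, μ i * (v i a * v i a) := by
            exact Finset.sum_congr rfl fun a _ => hXe a a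
        _ = ∑ i, μ i * ∑ a, v i a ^ 2 := by
            rw [Finset.sum_comm]
            exact Finset.sum_congr rfl fun i _ => by
              rw [Finset.mul_sum]; exact Finset.sum_congr rfl fun a _ => by ring
        _ = ∑ i, μ i := by
            exact Finset.sum_congr rfl fun i _ => by rw [hnorm i, mul_one]
    rw [← this, htr]
  -- eigenvector support
  have hvsupp : ∀ i j, μ i ≠ 0 → z j = 0 → v i j = 0 := by
    intro i j hμi hzj
    have h1 : X.mulVec (v i) j = μ i * v i j := by
      have := congrFun (hH.mulVec_eigenvectorBasis i) j
      simpa [hvdef] using this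
    have h2 : X.mulVec (v i) j = 0 := by
      simp only [Matrix.mulVec, dotProduct]
      exact Finset.sum_eq_zero fun b _ => by rw [hsupp j b hzj, zero_mul]
    rw [h2] at h1
    rcases mul_eq_zero.mp h1.symm with h | h
    · exact absurd h hμi
    · exact h
  -- quadratic forms
  set q : Fin p → ℝ := fun i => ∑ a, ∑ b, v i a * S a b * v i b with hqdef
  have hobj : (∑ a, ∑ b, S a b * X a b) = ∑ i, μ i * q i := by
    calc (∑ a, ∑ b, S a b * X a b)
        = ∑ a, ∑ b, ∑ i, μ i * (v i a * S a b * v i b) := by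
          refine Finset.sum_congr rfl fun a _ => Finset.sum_congr rfl fun b _ => ?_
          rw [hXe a b, Finset.mul_sum]
          exact Finset.sum_congr rfl fun i _ => by ring
      _ = ∑ a, ∑ i, ∑ b, μ i * (v i a * S a b * v i b) :=
          Finset.sum_congr rfl fun a _ => Finset.sum_comm
      _ = ∑ i, ∑ a, ∑ b, μ i * (v i a * S a b * v i b) := Finset.sum_comm
      _ = ∑ i, μ i * q i := by
          refine Finset.sum_congr rfl fun i _ => ?_
          rw [hqdef]
          simp only [Finset.mul_sum]
  -- pick maximizer
  set T : Finset (Fin p) := Finset.univ.filter (fun i => μ i ≠ 0) with hTdef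
  have hTne : T.Nonempty := by
    by_contra h
    rw [Finset.not_nonempty_iff_eq_empty] at h
    have : (∑ i, μ i) = 0 := by
      refine Finset.sum_eq_zero fun i _ => ?_
      by_contra hi
      have : i ∈ T := by simp [hTdef, hi]
      simp [h] at this
    rw [hsum] at this; norm_num at this
  obtain ⟨i₀, hi₀T, hi₀max⟩ := T.exists_max_image q hTne
  have hμi₀ : μ i₀ ≠ 0 := by simpa [hTdef] using hi₀T
  refine ⟨v i₀, hnorm i₀, ?_, ?_⟩
  · -- sparsity
    have hsub : (Finset.univ.filter (fun a => v i₀ a ≠ 0)) ⊆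
        (Finset.univ.filter (fun a => z a ≠ 0)) := by
      intro a ha
      simp only [Finset.mem_filter, Finset.mem_univ, true_and] at ha ⊢
      intro hza
      exact ha (hvsupp i₀ a hμi₀ hza)
    have hcard : ((Finset.univ.filter (fun a => z a ≠ 0)).card : ℝ) ≤ (k : ℝ) := by
      calc ((Finset.univ.filter (fun a => z a ≠ 0)).card : ℝ)
          = ∑ a ∈ Finset.univ.filter (fun a => z a ≠ 0), z a := by
            rw [Finset.card_eq_sum_ones, Nat.cast_sum]
            refine Finset.sum_congr rfl fun a ha => ?_
            simp only [Finset.mem_filter] at ha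
            simp [(hzbin a).resolve_left ha.2]
        _ ≤ ∑ a, z a := by
            refine Finset.sum_le_sum_of_subset_of_nonneg (Finset.filter_subset _ _) ?_
            intro a _ _
            rcases hzbin a with h | h <;> simp [h]
        _ ≤ (k : ℝ) := hzk
    have := (Finset.card_le_card hsub)
    have h2 : ((Finset.univ.filter (fun a => v i₀ a ≠ 0)).card : ℝ) ≤ (k : ℝ) :=
      le_trans (by exact_mod_cast this) hcard
    exact_mod_cast h2
  · -- objective
    rw [ge_iff_le, hobj]
    have hTsum : (∑ i ∈ T, μ i) = 1 := by
      rw [← hsum]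
      refine Finset.sum_subset (Finset.filter_subset _ _) ?_
      intro i _ hi
      simpa [hTdef] using hi
    calc (∑ i, μ i * q i) = ∑ i ∈ T, μ i * q i := by
          symm
          refine Finset.sum_subset (Finset.filter_subset _ _) ?_
          intro i _ hi
          have h0 : μ i = 0 := by simpa [hTdef] using hi
          rw [h0, zero_mul]
      _ ≤ ∑ i ∈ T, μ i * q i₀ := by
          refine Finset.sum_le_sum fun i hi => ?_
          exact mul_le_mul_of_nonneg_left (hi₀max i hi) (hμnn i)
      _ = q i₀ := by rw [← Finset.sum_mul, hTsum, one_mul]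
end

section
/- (Weak duality for the sparse PCA subproblem.) Let z ∈ [0,1]^p. Let X ∈ ℝ^{p×p} satisfy X ⪰ 0, tr(X) = 1, |X_{i,j}| ≤ M_{i,j} z_i for all i,j ∈ [p], and ∑_{j=1}^p |X_{i,j}| ≤ √k · z_i for all i ∈ [p]. Let λ ∈ ℝ, let α ∈ ℝ^{p×p} be symmetric with λI + α − Σ ⪰ 0, and let β ∈ ℝ^p with β_i ≥ 0 for all i. Then ⟨Σ, X⟩ ≤ λ + ∑_{i=1}^p z_i ( ∑_{j=1}^p M_{i,j} · max(0, |α_{i,j}| − β_i) + √k · β_i ). -/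
open Matrix

lemma psd_diag_nonneg {n : ℕ} {M : Matrix (Fin n) (Fin n) ℝ} (hM : M.PosSemidef)
    (i : Fin n) : 0 ≤ M i i := by
  exact hM.diag_nonneg

open scoped MatrixOrder

lemma psd_trace_mul_nonneg {n : ℕ} {A B : Matrix (Fin n) (Fin n) ℝ}
    (hA : A.PosSemidef) (hB : B.PosSemidef) : 0 ≤ (A * B).trace := by
  obtain ⟨C, rfl⟩ := CStarAlgebra.nonneg_iff_eq_star_mul_self.mp hA.nonneg
  rw [Matrix.mul_assoc, Matrix.trace_mul_comm]
  have h := hB.mul_mul_conjTranspose_same C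
  rw [Matrix.trace]
  exact Finset.sum_nonneg fun i _ => psd_diag_nonneg h i

/-- Weak duality for the sparse PCA subproblem. -/
theorem sparsePCA_subproblem_weak_duality (p k : ℕ) (hk1 : 1 ≤ k) (hkp : k ≤ p)
    (S : Matrix (Fin p) (Fin p) ℝ) (hS : S.IsHermitian)
    (z : Fin p → ℝ) (hz01 : ∀ i, 0 ≤ z i ∧ z i ≤ 1)
    (X : Matrix (Fin p) (Fin p) ℝ) (hX : X.PosSemidef) (htr : X.trace = 1)
    (hM : ∀ i j, |X i j| ≤ (if i = j then (1 : ℝ) else 1 / 2) * z i)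
    (hrow : ∀ i, ∑ j, |X i j| ≤ Real.sqrt k * z i)
    (l : ℝ) (a : Matrix (Fin p) (Fin p) ℝ) (ha : aᵀ = a)
    (hfeas : (l • (1 : Matrix (Fin p) (Fin p) ℝ) + a - S).PosSemidef)
    (b : Fin p → ℝ) (hb : ∀ i, 0 ≤ b i) :
    ∑ i, ∑ j, S i j * X i j ≤
      l + ∑ i, z i * ((∑ j, (if i = j then (1 : ℝ) else 1 / 2) * max 0 (|a i j| - b i))
            + Real.sqrt k * b i) := by
  have hXsym : ∀ i j, X j i = X i j := fun i j => by
    have := hX.1; rw [Matrix.IsHermitian] at this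
    conv_lhs => rw [← this]
    simp [Matrix.conjTranspose_apply]
  -- key trace inequality
  have hkey : 0 ≤ ((l • (1 : Matrix (Fin p) (Fin p) ℝ) + a - S) * X).trace :=
    psd_trace_mul_nonneg hfeas hX
  have htrexp : ((l • (1 : Matrix (Fin p) (Fin p) ℝ) + a - S) * X).trace
      = l + (a * X).trace - (S * X).trace := by
    rw [Matrix.sub_mul, Matrix.add_mul, Matrix.smul_mul, Matrix.one_mul,
      Matrix.trace_sub, Matrix.trace_add, Matrix.trace_smul, htr]
    simp
  have h1 : (S * X).trace ≤ l + (a * X).trace := by linarith [hkey, htrexp ▸ hkey]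
  have hSX : ∑ i, ∑ j, S i j * X i j = (S * X).trace := by
    rw [Matrix.trace]
    refine Finset.sum_congr rfl fun i _ => ?_
    rw [Matrix.diag, Matrix.mul_apply]
    exact Finset.sum_congr rfl fun j _ => by rw [hXsym i j]
  have haX : (a * X).trace = ∑ i, ∑ j, a i j * X i j := by
    rw [Matrix.trace]
    refine Finset.sum_congr rfl fun i _ => ?_
    rw [Matrix.diag, Matrix.mul_apply]
    exact Finset.sum_congr rfl fun j _ => by rw [hXsym i j]
  have h2 : ∀ i, ∑ j, a i j * X i j ≤
      z i * ((∑ j, (if i = j then (1 : ℝ) else 1 / 2) * max 0 (|a i j| - b i))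
        + Real.sqrt k * b i) := by
    intro i
    have hzi := (hz01 i).1
    have step : ∀ j, a i j * X i j ≤
        max 0 (|a i j| - b i) * ((if i = j then (1 : ℝ) else 1 / 2) * z i)
          + b i * |X i j| := by
      intro j
      have h3 : a i j * X i j ≤ |a i j| * |X i j| := by
        calc a i j * X i j ≤ |a i j * X i j| := le_abs_self _
        _ = |a i j| * |X i j| := abs_mul _ _
      have h4 : |a i j| * |X i j| = (|a i j| - b i) * |X i j| + b i * |X i j| := by ring
      have h5 : (|a i j| - b i) * |X i j| ≤ max 0 (|a i j| - b i) * |X i j| :=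
        mul_le_mul_of_nonneg_right (le_max_right _ _) (abs_nonneg _)
      have h6 : max 0 (|a i j| - b i) * |X i j| ≤
          max 0 (|a i j| - b i) * ((if i = j then (1 : ℝ) else 1 / 2) * z i) :=
        mul_le_mul_of_nonneg_left (hM i j) (le_max_left _ _)
      linarith
    calc ∑ j, a i j * X i j
        ≤ ∑ j, (max 0 (|a i j| - b i) * ((if i = j then (1 : ℝ) else 1 / 2) * z i)
            + b i * |X i j|) := Finset.sum_le_sum fun j _ => step j
      _ = (∑ j, (if i = j then (1 : ℝ) else 1 / 2) * max 0 (|a i j| - b i)) * z i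
            + b i * ∑ j, |X i j| := by
          rw [Finset.sum_add_distrib, ← Finset.mul_sum, Finset.sum_mul]
          congr 1
          exact Finset.sum_congr rfl fun j _ => by ring
      _ ≤ (∑ j, (if i = j then (1 : ℝ) else 1 / 2) * max 0 (|a i j| - b i)) * z i
            + b i * (Real.sqrt k * z i) := by
          have := mul_le_mul_of_nonneg_left (hrow i) (hb i)
          linarith
      _ = z i * ((∑ j, (if i = j then (1 : ℝ) else 1 / 2) * max 0 (|a i j| - b i))
            + Real.sqrt k * b i) := by ring
  calc ∑ i, ∑ j, S i j * X i j = (S * X).trace := hSX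
    _ ≤ l + (a * X).trace := h1
    _ = l + ∑ i, ∑ j, a i j * X i j := by rw [haX]
    _ ≤ _ := by
        have := Finset.sum_le_sum fun i (_ : i ∈ Finset.univ) => h2 i
        linarith
end

section
/- Let Σ be a real symmetric positive semidefinite matrix written in block form Σ = [[Σ₁₁, Σ₁₂], [Σ₁₂ᵀ, Σ₂₂]] with Σ₁₁ of size q×q and Σ₂₂ of size (p−q)×(p−q). Let λ = λ_max(Σ₁₁), and suppose that (I − (λI − Σ₁₁)(λI − Σ₁₁)†) Σ₁₂ = 0, where (·)† denotes the Moore–Penrose pseudoinverse. Define α̂₂₂ = Σ₂₂ − λI + Σ₁₂ᵀ (λI − Σ₁₁)† Σ₁₂ and α̂ = [[0, 0], [0, α̂₂₂]]. Then λI + α̂ − Σ ⪰ 0; that is, the pair (λ, α̂) is dual feasible for the sparse PCA separation problem. -/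
open Matrix

/-- Auxiliary: a PSD conjugation lemma for the block factorization. -/
theorem aux_fromBlocks_psd (q r : ℕ)
    (B : Matrix (Fin q) (Fin r) ℝ)
    (N : Matrix (Fin q) (Fin q) ℝ) (hNsym : Nᵀ = N)
    (P : Matrix (Fin q) (Fin q) ℝ)
    (hB : ((1 : Matrix (Fin q) (Fin q) ℝ) - N * P) * B = 0)
    (hNpsd : N.PosSemidef) :
    (Matrix.fromBlocks N (-B) (-Bᵀ) (Bᵀ * P * B)).PosSemidef := by
  have hB' : N * P * B = B := by
    have h : B - N * P * B = 0 := by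
      have := hB; rwa [Matrix.sub_mul, Matrix.one_mul] at this
    linear_combination (norm := noncomm_ring) -h
  have hBt : Bᵀ * Pᵀ * N = Bᵀ := by
    calc Bᵀ * Pᵀ * N = (Nᵀ * P * B)ᵀ := by
          simp [Matrix.transpose_mul, Matrix.mul_assoc]
      _ = Bᵀ := by rw [hNsym, hB']
  set L : Matrix (Fin q ⊕ Fin r) (Fin q ⊕ Fin r) ℝ :=
    Matrix.fromBlocks 1 (-(P * B)) 0 0 with hL
  set N' : Matrix (Fin q ⊕ Fin r) (Fin q ⊕ Fin r) ℝ :=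
    Matrix.fromBlocks N 0 0 0 with hN'
  have hN'psd : N'.PosSemidef := by
    rw [hN']
    refine Matrix.PosSemidef.of_dotProduct_mulVec_nonneg ?_ ?_
    · exact Matrix.isHermitian_fromBlocks_iff.mpr
        ⟨hNpsd.1, by simp, by simp, Matrix.isHermitian_zero⟩
    · intro x
      have := hNpsd.dotProduct_mulVec_nonneg (fun i => x (Sum.inl i))
      simpa [dotProduct, Fintype.sum_sum_type, Matrix.mulVec, Matrix.fromBlocks] using this
  have key : Matrix.fromBlocks N (-B) (-Bᵀ) (Bᵀ * P * B) = Lᴴ * N' * L := by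
    rw [hL, hN']
    simp only [Matrix.conjTranspose_eq_transpose_of_trivial, Matrix.fromBlocks_transpose,
      Matrix.fromBlocks_multiply, Matrix.transpose_zero, Matrix.transpose_one,
      Matrix.transpose_neg, Matrix.transpose_mul,
      Matrix.mul_one, Matrix.mul_zero, Matrix.zero_mul, Matrix.one_mul,
      add_zero, zero_add, Matrix.mul_neg, Matrix.neg_mul, neg_neg]
    rw [← Matrix.mul_assoc N P B, hB', hBt, ← Matrix.mul_assoc]
  rw [key]
  exact hN'psd.conjTranspose_mul_mul_same L

/-- Auxiliary: `l • 1 - A` is PSD when `l` is the largest eigenvalue of `A`. -/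
theorem aux_smul_one_sub_psd (q : ℕ) (hq : 0 < q) (A : Matrix (Fin q) (Fin q) ℝ)
    (hA : A.IsHermitian) (l : ℝ) (hl : l = ⨆ i, hA.eigenvalues i) :
    (l • (1 : Matrix (Fin q) (Fin q) ℝ) - A).PosSemidef := by
  have hq' : Nonempty (Fin q) := ⟨⟨0, hq⟩⟩
  set U : Matrix (Fin q) (Fin q) ℝ := (hA.eigenvectorUnitary : Matrix (Fin q) (Fin q) ℝ)
  have hU : U * star U = 1 := (Matrix.mem_unitaryGroup_iff).mp hA.eigenvectorUnitary.2
  have hspec := hA.spectral_theorem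
  have key : l • (1 : Matrix (Fin q) (Fin q) ℝ) - A
      = U * diagonal (fun i => l - hA.eigenvalues i) * star U := by
    have h1 : l • (1 : Matrix (Fin q) (Fin q) ℝ) = U * (l • 1) * star U := by
      rw [mul_smul_comm, mul_one, smul_mul_assoc, hU]
    rw [h1]
    nth_rewrite 1 [hspec]
    rw [Unitary.conjStarAlgAut_apply]
    rw [← sub_mul, ← mul_sub]
    congr 1
    congr 1
    ext i j
    by_cases h : i = j <;> simp [diagonal, h, Matrix.one_apply, smul_eq_mul]
  rw [key]
  exact (posSemidef_diagonal_iff.mpr (fun i => by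
    rw [hl]
    exact sub_nonneg.mpr (le_ciSup (Set.finite_range _).bddAbove i))).mul_mul_conjTranspose_same U

/-- Dual feasibility of the explicit dual solution built from the leading
eigenvalue of the top-left block and a Schur-complement correction, where the
Moore–Penrose pseudoinverse is characterized by the four Penrose conditions. -/
theorem dual_feasibility_schur_complement (q r : ℕ) (hq : 0 < q)
    (A : Matrix (Fin q) (Fin q) ℝ) (B : Matrix (Fin q) (Fin r) ℝ)
    (C : Matrix (Fin r) (Fin r) ℝ)
    (hPSD : (Matrix.fromBlocks A B Bᵀ C).PosSemidef)
    (hA : A.IsHermitian)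
    (l : ℝ) (hl : l = ⨆ i, hA.eigenvalues i)
    (N : Matrix (Fin q) (Fin q) ℝ) (hN : N = l • (1 : Matrix (Fin q) (Fin q) ℝ) - A)
    (P : Matrix (Fin q) (Fin q) ℝ)
    (hP1 : N * P * N = N) (hP2 : P * N * P = P)
    (hP3 : (N * P)ᵀ = N * P) (hP4 : (P * N)ᵀ = P * N)
    (hB : ((1 : Matrix (Fin q) (Fin q) ℝ) - N * P) * B = 0) :
    (l • (1 : Matrix (Fin q ⊕ Fin r) (Fin q ⊕ Fin r) ℝ)
      + Matrix.fromBlocks 0 0 0 (C - l • (1 : Matrix (Fin r) (Fin r) ℝ) + Bᵀ * P * B)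
      - Matrix.fromBlocks A B Bᵀ C).PosSemidef := by
  have hNsym : Nᵀ = N := by
    rw [hN, Matrix.transpose_sub, Matrix.transpose_smul, Matrix.transpose_one,
      ← Matrix.conjTranspose_eq_transpose_of_trivial, hA.eq]
  have hNpsd : N.PosSemidef := hN ▸ aux_smul_one_sub_psd q hq A hA l hl
  have key : l • (1 : Matrix (Fin q ⊕ Fin r) (Fin q ⊕ Fin r) ℝ)
      + Matrix.fromBlocks 0 0 0 (C - l • (1 : Matrix (Fin r) (Fin r) ℝ) + Bᵀ * P * B)
      - Matrix.fromBlocks A B Bᵀ C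
      = Matrix.fromBlocks N (-B) (-Bᵀ) (Bᵀ * P * B) := by
    rw [hN]
    ext (i|i) (j|j) <;>
      simp [Matrix.fromBlocks, Matrix.one_apply, Matrix.sub_apply, Matrix.add_apply,
        Matrix.smul_apply, smul_eq_mul] <;> ring
  rw [key]
  exact aux_fromBlocks_psd q r B N hNsym P hB hNpsd
end

section
/- (Approximation quality of the Gershgorin bound for scaled diagonally dominant matrices.) Let Σ be a p×p real symmetric positive semidefinite matrix and suppose there exists d ∈ ℝ^p with d_i > 0 for all i such that d_i Σ_{i,i} ≥ ∑_{j ≠ i} d_j |Σ_{i,j}| for every i ∈ [p]. Let ρ = max_{i,j ∈ [p]} d_i / d_j. Then for every nonempty S ⊆ [p], letting f(S) denote the largest eigenvalue of the principal submatrix of Σ indexed by S, one has f(S) ≤ max_{j ∈ S} ∑_{i ∈ S} |Σ_{i,j}| ≤ (1 + ρ) · f(S). -/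
/-- For a scaled diagonally dominant PSD matrix, the Gershgorin circle bound
is a (1+ρ)-factor approximation of the largest eigenvalue of any principal submatrix
(expressed as the maximal Rayleigh quotient over unit vectors supported in S). -/
theorem gershgorin_approximation_sdd (p : ℕ) (S : Matrix (Fin p) (Fin p) ℝ)
    (hS : S.PosSemidef)
    (d : Fin p → ℝ) (hd : ∀ i, 0 < d i)
    (hdd : ∀ i, (∑ j ∈ Finset.univ.erase i, d j * |S i j|) ≤ d i * S i i)
    (rho : ℝ) (hrho : rho = ⨆ i, ⨆ j, d i / d j)
    (T : Finset (Fin p)) (hT : T.Nonempty)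
    (fS : ℝ)
    (hfS : fS = sSup {v : ℝ | ∃ x : Fin p → ℝ, (∑ i, x i ^ 2) = 1 ∧
        (∀ i ∉ T, x i = 0) ∧ v = ∑ i, ∑ j, x i * S i j * x j}) :
    fS ≤ T.sup' hT (fun j => ∑ i ∈ T, |S i j|) ∧
    T.sup' hT (fun j => ∑ i ∈ T, |S i j|) ≤ (1 + rho) * fS := by
  set G := T.sup' hT (fun j => ∑ i ∈ T, |S i j|) with hGdef
  have hsym : ∀ i j, S i j = S j i := fun i j => by
    simpa using hS.1.apply j i
  have hdiagnn : ∀ j, 0 ≤ S j j := fun j => hS.diag_nonneg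
  obtain ⟨j₀, hj₀⟩ := id hT
  have hG0 : (0:ℝ) ≤ G := le_trans (Finset.sum_nonneg fun i _ => abs_nonneg _)
    (Finset.le_sup' (fun j => ∑ i ∈ T, |S i j|) hj₀)
  -- key upper bound on any Rayleigh quotient value
  have key : ∀ x : Fin p → ℝ, (∑ i, x i ^ 2) = 1 → (∀ i ∉ T, x i = 0) →
      (∑ i, ∑ j, x i * S i j * x j) ≤ G := by
    intro x hx1 hx0
    have hsum1 : (∑ i ∈ T, x i ^ 2) = 1 := by
      rw [← hx1]
      exact Finset.sum_subset T.subset_univ (fun i _ hi => by rw [hx0 i hi]; ring)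
    have hrestrict : (∑ i, ∑ j, x i * S i j * x j)
        = ∑ i ∈ T, ∑ j ∈ T, x i * S i j * x j := by
      rw [← Finset.sum_subset T.subset_univ
        (fun i _ hi => by simp [hx0 i hi])]
      refine Finset.sum_congr rfl fun i _ => ?_
      exact (Finset.sum_subset T.subset_univ (fun j _ hj => by simp [hx0 j hj])).symm
    rw [hrestrict]
    have step1 : (∑ i ∈ T, ∑ j ∈ T, x i * S i j * x j)
        ≤ ∑ i ∈ T, ∑ j ∈ T, |S i j| * (x i ^ 2 + x j ^ 2) / 2 := by
      refine Finset.sum_le_sum fun i _ => Finset.sum_le_sum fun j _ => ?_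
      calc x i * S i j * x j ≤ |x i * S i j * x j| := le_abs_self _
        _ = |S i j| * (|x i| * |x j|) := by rw [abs_mul, abs_mul]; ring
        _ ≤ |S i j| * ((x i ^ 2 + x j ^ 2) / 2) := by
            refine mul_le_mul_of_nonneg_left ?_ (abs_nonneg _)
            nlinarith [sq_nonneg (|x i| - |x j|), sq_abs (x i), sq_abs (x j)]
        _ = |S i j| * (x i ^ 2 + x j ^ 2) / 2 := by ring
    have step2 : (∑ i ∈ T, ∑ j ∈ T, |S i j| * (x i ^ 2 + x j ^ 2) / 2)
        = ∑ i ∈ T, x i ^ 2 * ∑ j ∈ T, |S i j| := by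
      have hswap : (∑ i ∈ T, ∑ j ∈ T, |S i j| * x j ^ 2 / 2)
          = ∑ i ∈ T, ∑ j ∈ T, |S i j| * x i ^ 2 / 2 := by
        rw [Finset.sum_comm]
        exact Finset.sum_congr rfl fun i _ => Finset.sum_congr rfl fun j _ => by
          rw [hsym j i]
      calc (∑ i ∈ T, ∑ j ∈ T, |S i j| * (x i ^ 2 + x j ^ 2) / 2)
          = (∑ i ∈ T, ∑ j ∈ T, |S i j| * x i ^ 2 / 2)
            + ∑ i ∈ T, ∑ j ∈ T, |S i j| * x j ^ 2 / 2 := by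
            rw [← Finset.sum_add_distrib]
            exact Finset.sum_congr rfl fun i _ => by
              rw [← Finset.sum_add_distrib]
              exact Finset.sum_congr rfl fun j _ => by ring
        _ = ∑ i ∈ T, ∑ j ∈ T, |S i j| * x i ^ 2 := by
            rw [hswap, ← Finset.sum_add_distrib]
            exact Finset.sum_congr rfl fun i _ => by
              rw [← Finset.sum_add_distrib]
              exact Finset.sum_congr rfl fun j _ => by ring
        _ = ∑ i ∈ T, x i ^ 2 * ∑ j ∈ T, |S i j| := by
            exact Finset.sum_congr rfl fun i _ => by
              rw [Finset.mul_sum]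
              exact Finset.sum_congr rfl fun j _ => by ring
    have step3 : (∑ i ∈ T, x i ^ 2 * ∑ j ∈ T, |S i j|) ≤ G := by
      calc (∑ i ∈ T, x i ^ 2 * ∑ j ∈ T, |S i j|) ≤ ∑ i ∈ T, x i ^ 2 * G := by
            refine Finset.sum_le_sum fun i hi => ?_
            refine mul_le_mul_of_nonneg_left ?_ (sq_nonneg _)
            have : (∑ j ∈ T, |S i j|) = ∑ j ∈ T, |S j i| :=
              Finset.sum_congr rfl fun j _ => by rw [hsym i j]
            rw [this]
            exact Finset.le_sup' (fun j => ∑ k ∈ T, |S k j|) hi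
        _ = G := by rw [← Finset.sum_mul, hsum1, one_mul]
    linarith [step1, step2 ▸ step2.le, step3]
  have hset : ∀ v ∈ {v : ℝ | ∃ x : Fin p → ℝ, (∑ i, x i ^ 2) = 1 ∧
      (∀ i ∉ T, x i = 0) ∧ v = ∑ i, ∑ j, x i * S i j * x j}, v ≤ G := by
    rintro v ⟨x, hx1, hx0, rfl⟩
    exact key x hx1 hx0
  have hbdd : BddAbove {v : ℝ | ∃ x : Fin p → ℝ, (∑ i, x i ^ 2) = 1 ∧
      (∀ i ∉ T, x i = 0) ∧ v = ∑ i, ∑ j, x i * S i j * x j} := ⟨G, hset⟩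
  -- diagonal entries are achieved Rayleigh values
  have hdiag_le : ∀ j ∈ T, S j j ≤ fS := by
    intro j hj
    rw [hfS]
    refine le_csSup hbdd ?_
    refine ⟨fun i => if i = j then 1 else 0, ?_, ?_, ?_⟩
    · simp [ite_pow, Finset.sum_ite_eq']
    · intro i hi
      simp only [ite_eq_right_iff]
      intro h; exact absurd (h ▸ hj) hi
    · rw [Finset.sum_eq_single j]
      · rw [Finset.sum_eq_single j] <;> simp +contextual
      · intro i _ hij
        simp [hij]
      · simp
  have part1 : fS ≤ G := by
    rw [hfS]
    exact Real.sSup_le hset hG0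
  -- rho bounds all ratios
  haveI : Nonempty (Fin p) := ⟨j₀⟩
  have hr : ∀ i j, d i / d j ≤ rho := by
    intro i j
    rw [hrho]
    calc d i / d j ≤ ⨆ j, d i / d j :=
          le_ciSup (f := fun j => d i / d j)
            (Set.Finite.bddAbove (Set.finite_range _)) j
      _ ≤ ⨆ i, ⨆ j, d i / d j :=
          le_ciSup (f := fun i => ⨆ j, d i / d j)
            (Set.Finite.bddAbove (Set.finite_range _)) i
  have hrho0 : (0:ℝ) ≤ rho := le_trans (le_of_lt (div_pos (hd j₀) (hd j₀))) (hr j₀ j₀)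
  have part2 : G ≤ (1 + rho) * fS := by
    refine Finset.sup'_le hT _ fun j hj => ?_
    have hcol : (∑ i ∈ T, |S i j|) ≤ (1 + rho) * S j j := by
      have hsplit : (∑ i ∈ T, |S i j|) = |S j j| + ∑ i ∈ T.erase j, |S i j| :=
        (Finset.add_sum_erase T _ hj).symm
      have h1 : (∑ i ∈ T.erase j, |S i j|) ≤ ∑ i ∈ Finset.univ.erase j, |S i j| :=
        Finset.sum_le_sum_of_subset_of_nonneg
          (Finset.erase_subset_erase _ T.subset_univ)
          (fun _ _ _ => abs_nonneg _)
      have h2 : (∑ i ∈ Finset.univ.erase j, |S i j|)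
          ≤ (rho / d j) * ∑ i ∈ Finset.univ.erase j, d i * |S j i| := by
        rw [Finset.mul_sum]
        refine Finset.sum_le_sum fun i _ => ?_
        have hdi := hd i
        have hdj := hd j
        have habs : (0:ℝ) ≤ |S j i| := abs_nonneg _
        have hratio : d j ≤ rho * d i := (div_le_iff₀ hdi).mp (hr j i)
        rw [hsym i j, div_mul_eq_mul_div, le_div_iff₀ hdj]
        nlinarith [mul_le_mul_of_nonneg_right hratio habs]
      have h3 : (rho / d j) * (∑ i ∈ Finset.univ.erase j, d i * |S j i|)
          ≤ rho * S j j := by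
        have := mul_le_mul_of_nonneg_left (hdd j)
          (div_nonneg hrho0 (hd j).le)
        calc (rho / d j) * (∑ i ∈ Finset.univ.erase j, d i * |S j i|)
            ≤ (rho / d j) * (d j * S j j) := this
          _ = rho * S j j := by
              have hne : d j ≠ 0 := (hd j).ne'
              field_simp
      have habsj : |S j j| = S j j := abs_of_nonneg (hdiagnn j)
      rw [hsplit, habsj]
      nlinarith [h1, h2, h3]
    calc (∑ i ∈ T, |S i j|) ≤ (1 + rho) * S j j := hcol
      _ ≤ (1 + rho) * fS := mul_le_mul_of_nonneg_left (hdiag_le j hj) (by linarith)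
  exact ⟨part1, part2⟩
end

section
/- (Two-factor guarantee of the ovals-of-Cassini bound for doubly diagonally dominant matrices.) Let Σ be a p×p real symmetric positive semidefinite matrix satisfying Σ_{i,i} Σ_{j,j} ≥ R_i R_j for all i ≠ j, where R_i = ∑_{j ≠ i} |Σ_{i,j}|. Then for every S ⊆ [p] with |S| ≥ 2, letting f(S) denote the largest eigenvalue of the principal submatrix of Σ indexed by S and R_i(S) = ∑_{j ∈ S, j ≠ i} |Σ_{i,j}|, one has f(S) ≤ max_{i,j ∈ S, i ≠ j} [ (Σ_{i,i} + Σ_{j,j})/2 + (1/2)·√( (Σ_{i,i} − Σ_{j,j})² + 4 R_i(S) R_j(S) ) ] ≤ 2 f(S). -/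
open Matrix

private lemma quad_bound {μ a b ρ : ℝ} (hρ : 0 ≤ ρ)
    (h : |μ - a| * |μ - b| ≤ ρ) :
    μ ≤ (a + b) / 2 + Real.sqrt ((a - b) ^ 2 + 4 * ρ) / 2 := by
  set s := Real.sqrt ((a - b) ^ 2 + 4 * ρ) with hs_def
  have hs0 : 0 ≤ s := Real.sqrt_nonneg _
  have hs2 : s ^ 2 = (a - b) ^ 2 + 4 * ρ := Real.sq_sqrt (by positivity)
  have habs : |a - b| ≤ s := by
    rw [← Real.sqrt_sq_eq_abs]
    exact Real.sqrt_le_sqrt (by nlinarith)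
  obtain ⟨hab1, hab2⟩ := abs_le.mp habs
  by_contra hμ
  push_neg at hμ
  have ha : a < μ := by linarith
  have hb : b < μ := by linarith
  rw [abs_of_pos (by linarith), abs_of_pos (by linarith)] at h
  nlinarith [mul_pos (show (0:ℝ) < 2*μ-a-b-s by linarith)
    (show (0:ℝ) < 2*μ-a-b+s by linarith)]

private lemma brauer_pair {n : Type*} [Fintype n] [DecidableEq n]
    (A : Matrix n n ℝ) (hn : 2 ≤ Fintype.card n) {μ : ℝ} {v : n → ℝ}
    (hv : v ≠ 0) (heig : A *ᵥ v = μ • v) :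
    ∃ i j : n, i ≠ j ∧ |μ - A i i| * |μ - A j j| ≤
      (∑ t ∈ Finset.univ.erase i, |A i t|) * (∑ t ∈ Finset.univ.erase j, |A j t|) := by
  classical
  have hne : (Finset.univ : Finset n).Nonempty :=
    Finset.univ_nonempty_iff.mpr (Fintype.card_pos_iff.mp (by omega))
  obtain ⟨i, -, hi⟩ := Finset.exists_max_image Finset.univ (fun t => |v t|) hne
  have hne2 : (Finset.univ.erase i).Nonempty := by
    rw [← Finset.card_pos, Finset.card_erase_of_mem (Finset.mem_univ i), Finset.card_univ]
    omega
  obtain ⟨j, hjmem, hj⟩ := Finset.exists_max_image _ (fun t => |v t|) hne2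
  have hij : j ≠ i := (Finset.mem_erase.mp hjmem).1
  have hvi : 0 < |v i| := by
    rcases Function.ne_iff.mp hv with ⟨t, ht⟩
    exact lt_of_lt_of_le (abs_pos.mpr ht) (hi t (Finset.mem_univ t))
  have key : ∀ a : n, (μ - A a a) * v a = ∑ t ∈ Finset.univ.erase a, A a t * v t := by
    intro a
    have h1 := congrFun heig a
    simp only [Matrix.mulVec, dotProduct, Pi.smul_apply, smul_eq_mul] at h1
    have hsplit := Finset.add_sum_erase Finset.univ (fun t => A a t * v t) (Finset.mem_univ a)
    rw [sub_mul, ← h1, ← hsplit]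
    ring
  have hbound : ∀ a b : n, (∀ t ∈ Finset.univ.erase a, |v t| ≤ |v b|) →
      |μ - A a a| * |v a| ≤ (∑ t ∈ Finset.univ.erase a, |A a t|) * |v b| := by
    intro a b hb
    rw [← abs_mul, key a]
    calc |∑ t ∈ Finset.univ.erase a, A a t * v t|
        ≤ ∑ t ∈ Finset.univ.erase a, |A a t * v t| := Finset.abs_sum_le_sum_abs _ _
      _ ≤ ∑ t ∈ Finset.univ.erase a, |A a t| * |v b| := by
          refine Finset.sum_le_sum fun t ht => ?_
          rw [abs_mul]
          exact mul_le_mul_of_nonneg_left (hb t ht) (abs_nonneg _)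
      _ = _ := by rw [← Finset.sum_mul]
  have h1 := hbound i j hj
  have h2 := hbound j i (fun t _ => hi t (Finset.mem_univ t))
  refine ⟨i, j, hij.symm, ?_⟩
  have hRi : 0 ≤ ∑ t ∈ Finset.univ.erase i, |A i t| :=
    Finset.sum_nonneg fun t _ => abs_nonneg _
  have hRj : 0 ≤ ∑ t ∈ Finset.univ.erase j, |A j t| :=
    Finset.sum_nonneg fun t _ => abs_nonneg _
  rcases eq_or_lt_of_le (abs_nonneg (v j)) with hz | hz
  · have hz' : |v j| = 0 := hz.symm
    have h0 : |μ - A i i| = 0 := by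
      rw [hz', mul_zero] at h1
      nlinarith [abs_nonneg (μ - A i i)]
    rw [h0, zero_mul]
    positivity
  · have hmul := mul_le_mul h1 h2 (by positivity) (by positivity)
    nlinarith [mul_pos hvi hz, abs_nonneg (μ - A i i), abs_nonneg (μ - A j j)]

private lemma rayleigh_le {n : Type*} [Fintype n] [DecidableEq n]
    {A : Matrix n n ℝ} (hA : A.IsHermitian) {y : n → ℝ}
    (hy : y ⬝ᵥ y = 1) {c : ℝ} (hc : ∀ k, hA.eigenvalues k ≤ c) :
    y ⬝ᵥ A *ᵥ y ≤ c := by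
  classical
  set U : Matrix n n ℝ := (hA.eigenvectorUnitary : Matrix n n ℝ) with hU
  set z : n → ℝ := star U *ᵥ y with hz
  have hstar : star U = Uᵀ := by
    rw [Matrix.star_eq_conjTranspose, Matrix.conjTranspose_eq_transpose_of_trivial]
  have F1 : ∀ w : n → ℝ, y ⬝ᵥ (U *ᵥ w) = z ⬝ᵥ w := by
    intro w
    rw [Matrix.dotProduct_mulVec, hz, hstar, Matrix.mulVec_transpose]
  have hUU : U * star U = 1 := (Matrix.mem_unitaryGroup_iff).mp hA.eigenvectorUnitary.2
  have F2 : z ⬝ᵥ z = 1 := by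
    rw [← F1 z, hz, Matrix.mulVec_mulVec, hUU, Matrix.one_mulVec, hy]
  have F3 : y ⬝ᵥ A *ᵥ y = ∑ k, hA.eigenvalues k * z k ^ 2 := by
    conv_lhs => rw [hA.spectral_theorem, Unitary.conjStarAlgAut_apply, ← hU]
    rw [← Matrix.mulVec_mulVec, ← Matrix.mulVec_mulVec, F1]
    simp only [dotProduct, Matrix.mulVec_diagonal, RCLike.ofReal_real_eq_id,
      Function.comp_apply, id_eq, ← hz]
    exact Finset.sum_congr rfl fun k _ => by ring
  rw [F3]
  calc ∑ k, hA.eigenvalues k * z k ^ 2 ≤ ∑ k, c * z k ^ 2 :=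
        Finset.sum_le_sum fun k _ => mul_le_mul_of_nonneg_right (hc k) (sq_nonneg _)
    _ = c * (z ⬝ᵥ z) := by
        rw [← Finset.mul_sum, dotProduct]
        congr 1
        exact Finset.sum_congr rfl fun k _ => by ring
    _ = c := by rw [F2, mul_one]


/-- Two-factor guarantee of the ovals-of-Cassini bound for doubly
diagonally dominant PSD matrices, where the largest eigenvalue of the principal
submatrix indexed by S is expressed as the maximal Rayleigh quotient over unit
vectors supported in S. -/
theorem cassini_two_factor_ddd (p : ℕ) (S : Matrix (Fin p) (Fin p) ℝ)
    (hS : S.PosSemidef)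
    (hdd : ∀ i j, i ≠ j →
      (∑ t ∈ Finset.univ.erase i, |S i t|) * (∑ t ∈ Finset.univ.erase j, |S j t|) ≤
        S i i * S j j)
    (T : Finset (Fin p)) (hT : 2 ≤ T.card)
    (fS : ℝ)
    (hfS : fS = sSup {v : ℝ | ∃ x : Fin p → ℝ, (∑ i, x i ^ 2) = 1 ∧
        (∀ i ∉ T, x i = 0) ∧ v = ∑ i, ∑ j, x i * S i j * x j})
    (cassini : ℝ)
    (hcassini : cassini = sSup {v : ℝ | ∃ i ∈ T, ∃ j ∈ T, i ≠ j ∧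
        v = (S i i + S j j) / 2 +
          Real.sqrt ((S i i - S j j) ^ 2 +
            4 * (∑ t ∈ T.erase i, |S i t|) * (∑ t ∈ T.erase j, |S j t|)) / 2}) :
    fS ≤ cassini ∧ cassini ≤ 2 * fS := by
  classical
  set M : Matrix {x // x ∈ T} {x // x ∈ T} ℝ := S.submatrix Subtype.val Subtype.val with hMdef
  have hM : M.IsHermitian := hS.1.submatrix _
  have hcard : 2 ≤ Fintype.card {x // x ∈ T} := by
    rwa [Fintype.card_coe]
  have hdiag : ∀ i, 0 ≤ S i i := fun i => by
    exact hS.diag_nonneg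
  -- transfer of row sums
  have hRtrans : ∀ i : {x // x ∈ T},
      (∑ t ∈ Finset.univ.erase i, |M i t|) = ∑ t ∈ T.erase i.val, |S i.val t| := by
    intro i
    have e1 : (∑ t ∈ Finset.univ.erase i, |M i t|) + |M i i| = ∑ t : {x // x ∈ T}, |M i t| :=
      Finset.sum_erase_add _ _ (Finset.mem_univ i)
    have e2 : (∑ t ∈ T.erase i.val, |S i.val t|) + |S i.val i.val| = ∑ t ∈ T, |S i.val t| :=
      Finset.sum_erase_add _ _ i.prop
    have e3 : ∑ t ∈ T, |S i.val t| = ∑ t : {x // x ∈ T}, |S i.val t.val| :=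
      Finset.sum_subtype T (fun _ => Iff.rfl) _
    have e4 : ∑ t : {x // x ∈ T}, |M i t| = ∑ t : {x // x ∈ T}, |S i.val t.val| := rfl
    have e5 : |M i i| = |S i.val i.val| := rfl
    linarith
  -- cassini set is bounded above
  have cbdd : BddAbove {v : ℝ | ∃ i ∈ T, ∃ j ∈ T, i ≠ j ∧
      v = (S i i + S j j) / 2 +
        Real.sqrt ((S i i - S j j) ^ 2 +
          4 * (∑ t ∈ T.erase i, |S i t|) * (∑ t ∈ T.erase j, |S j t|)) / 2} := by
    apply Set.Finite.bddAbove
    apply Set.Finite.subset (Set.finite_range (fun ij : Fin p × Fin p =>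
      (S ij.1 ij.1 + S ij.2 ij.2) / 2 +
        Real.sqrt ((S ij.1 ij.1 - S ij.2 ij.2) ^ 2 +
          4 * (∑ t ∈ T.erase ij.1, |S ij.1 t|) * (∑ t ∈ T.erase ij.2, |S ij.2 t|)) / 2))
    rintro v ⟨i, -, j, -, -, rfl⟩
    exact ⟨(i, j), rfl⟩
  -- every eigenvalue of M is at most cassini
  have heig : ∀ k, hM.eigenvalues k ≤ cassini := by
    intro k
    have hvne : (⇑(hM.eigenvectorBasis k) : {x // x ∈ T} → ℝ) ≠ 0 := by
      intro h0
      exact hM.eigenvectorBasis.orthonormal.ne_zero k (by ext t; exact congrFun h0 t)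
    obtain ⟨i, j, hij, hb⟩ := brauer_pair M hcard hvne (hM.mulVec_eigenvectorBasis k)
    have hq := quad_bound (μ := hM.eigenvalues k) (a := M i i) (b := M j j)
      (ρ := (∑ t ∈ Finset.univ.erase i, |M i t|) * (∑ t ∈ Finset.univ.erase j, |M j t|))
      (mul_nonneg (Finset.sum_nonneg fun _ _ => abs_nonneg _)
        (Finset.sum_nonneg fun _ _ => abs_nonneg _)) hb
    have hterm : (M i i + M j j) / 2 +
        Real.sqrt ((M i i - M j j) ^ 2 +
          4 * ((∑ t ∈ Finset.univ.erase i, |M i t|) * (∑ t ∈ Finset.univ.erase j, |M j t|))) / 2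
        = (S i.val i.val + S j.val j.val) / 2 +
          Real.sqrt ((S i.val i.val - S j.val j.val) ^ 2 +
            4 * (∑ t ∈ T.erase i.val, |S i.val t|) * (∑ t ∈ T.erase j.val, |S j.val t|)) / 2 := by
      rw [hRtrans i, hRtrans j, ← mul_assoc]
      rfl
    rw [hcassini]
    calc hM.eigenvalues k ≤ _ := hq
      _ = _ := hterm
      _ ≤ _ := le_csSup cbdd ⟨i.val, i.prop, j.val, j.prop, Subtype.val_injective.ne hij, rfl⟩
  -- every Rayleigh value is at most cassini
  have fbound : ∀ v ∈ {v : ℝ | ∃ x : Fin p → ℝ, (∑ i, x i ^ 2) = 1 ∧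
      (∀ i ∉ T, x i = 0) ∧ v = ∑ i, ∑ j, x i * S i j * x j}, v ≤ cassini := by
    rintro v ⟨x, hx1, hx0, rfl⟩
    set y : {x // x ∈ T} → ℝ := fun t => x t.val with hydef
    have hsum : ∀ f : Fin p → ℝ, (∀ i ∉ T, f i = 0) →
        ∑ i, f i = ∑ i : {x // x ∈ T}, f i.val := by
      intro f hf
      rw [← Finset.sum_subtype T (fun _ => Iff.rfl) f]
      exact (Finset.sum_subset (Finset.subset_univ T) (fun t _ ht => hf t ht)).symm
    have hyy : y ⬝ᵥ y = 1 := by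
      have h1 := hsum (fun i => x i ^ 2) (fun i hi => by simp [hx0 i hi])
      rw [hx1] at h1
      have h1' : (1 : ℝ) = ∑ i : {x // x ∈ T}, x i.val ^ 2 := by simpa using h1
      rw [dotProduct, h1']
      exact Finset.sum_congr rfl fun t _ => by simp only [hydef]; ring
    have hq : (∑ i, ∑ j, x i * S i j * x j) = y ⬝ᵥ M *ᵥ y := by
      rw [hsum (fun i => ∑ j, x i * S i j * x j) (fun i hi => by
        simp [hx0 i hi])]
      rw [dotProduct]
      refine Finset.sum_congr rfl fun i _ => ?_
      rw [hsum (fun j => x i.val * S i.val j * x j) (fun j hj => by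
        simp [hx0 j hj])]
      simp only [Matrix.mulVec, dotProduct, Finset.mul_sum]
      refine Finset.sum_congr rfl fun j _ => ?_
      simp only [hMdef, Matrix.submatrix_apply, hydef]
      ring
    rw [hq]
    exact rayleigh_le hM hyy heig
  have fbdd : BddAbove {v : ℝ | ∃ x : Fin p → ℝ, (∑ i, x i ^ 2) = 1 ∧
      (∀ i ∉ T, x i = 0) ∧ v = ∑ i, ∑ j, x i * S i j * x j} := ⟨cassini, fbound⟩
  have hfS_ge : ∀ i ∈ T, S i i ≤ fS := by
    intro i hi
    rw [hfS]
    refine le_csSup fbdd ⟨(fun t => if t = i then 1 else 0), ?_, ?_, ?_⟩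
    · simp
    · intro t ht
      exact if_neg fun h => ht (by rw [h]; exact hi)
    · simp [ite_mul, mul_ite]
  have hc0 : 0 ≤ cassini := by
    obtain ⟨i, hi, j, hj, hij⟩ := Finset.one_lt_card.mp (by omega : 1 < T.card)
    rw [hcassini]
    refine le_trans ?_ (le_csSup cbdd ⟨i, hi, j, hj, hij, rfl⟩)
    have hs := Real.sqrt_nonneg ((S i i - S j j) ^ 2 +
      4 * (∑ t ∈ T.erase i, |S i t|) * (∑ t ∈ T.erase j, |S j t|))
    have := hdiag i; have := hdiag j
    linarith
  constructor
  · rw [hfS]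
    exact Real.sSup_le fbound hc0
  · have h2f : 0 ≤ 2 * fS := by
      obtain ⟨i, hi⟩ := Finset.card_pos.mp (by omega : 0 < T.card)
      have := hfS_ge i hi; have := hdiag i; linarith
    rw [hcassini]
    refine Real.sSup_le ?_ h2f
    rintro v ⟨i, hi, j, hj, hij, rfl⟩
    have hRi : (∑ t ∈ T.erase i, |S i t|) ≤ ∑ t ∈ Finset.univ.erase i, |S i t| :=
      Finset.sum_le_sum_of_subset_of_nonneg
        (fun t ht => Finset.mem_erase.mpr ⟨(Finset.mem_erase.mp ht).1, Finset.mem_univ t⟩)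
        (fun t _ _ => abs_nonneg _)
    have hRj : (∑ t ∈ T.erase j, |S j t|) ≤ ∑ t ∈ Finset.univ.erase j, |S j t| :=
      Finset.sum_le_sum_of_subset_of_nonneg
        (fun t ht => Finset.mem_erase.mpr ⟨(Finset.mem_erase.mp ht).1, Finset.mem_univ t⟩)
        (fun t _ _ => abs_nonneg _)
    have hRiT0 : 0 ≤ ∑ t ∈ T.erase i, |S i t| := Finset.sum_nonneg fun _ _ => abs_nonneg _
    have hRjT0 : 0 ≤ ∑ t ∈ T.erase j, |S j t| := Finset.sum_nonneg fun _ _ => abs_nonneg _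
    have hRj0 : 0 ≤ ∑ t ∈ Finset.univ.erase j, |S j t| :=
      Finset.sum_nonneg fun _ _ => abs_nonneg _
    have hprod : (∑ t ∈ T.erase i, |S i t|) * (∑ t ∈ T.erase j, |S j t|) ≤ S i i * S j j :=
      le_trans (mul_le_mul hRi hRj hRjT0 (le_trans hRiT0 hRi)) (hdd i j hij)
    have hab : 0 ≤ S i i + S j j := by have := hdiag i; have := hdiag j; linarith
    have hsq : Real.sqrt ((S i i - S j j) ^ 2 +
        4 * (∑ t ∈ T.erase i, |S i t|) * (∑ t ∈ T.erase j, |S j t|)) ≤ S i i + S j j := by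
      rw [show S i i + S j j = Real.sqrt ((S i i + S j j) ^ 2) from (Real.sqrt_sq hab).symm]
      apply Real.sqrt_le_sqrt
      nlinarith
    have hfi := hfS_ge i hi
    have hfj := hfS_ge j hj
    linarith
end

section
/- (Sandwich property of the strengthened relaxation.) Let P_relax = sup { ⟨Σ, X⟩ : z ∈ [0,1]^p, ∑_i z_i ≤ k, X ⪰ 0, tr(X) = 1, |X_{i,j}| ≤ M_{i,j} z_i ∀ i,j }, let P_strong = sup { ⟨Σ, X⟩ : z ∈ [0,1]^p, ∑_i z_i ≤ k, X ⪰ 0, tr(X) = 1, |X_{i,j}| ≤ M_{i,j} z_i ∀ i,j, ∑_{j=1}^p X_{i,j}² ≤ X_{i,i} z_i ∀ i, and ∑_{i,j} |X_{i,j}| ≤ k }, and let P_bin = sup { ⟨Σ, X⟩ : z ∈ {0,1}^p, ∑_i z_i ≤ k, X ⪰ 0, tr(X) = 1, |X_{i,j}| ≤ M_{i,j} z_i ∀ i,j }. Then P_relax ≥ P_strong ≥ P_bin. -/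
open scoped MatrixOrder in
lemma psd_entry_sq {p : ℕ} (X : Matrix (Fin p) (Fin p) ℝ) (hX : X.PosSemidef) (i j : Fin p) :
    (X i j) ^ 2 ≤ X i i * X j j := by
  obtain ⟨B, rfl⟩ : ∃ B : Matrix (Fin p) (Fin p) ℝ, X = B.conjTranspose * B := by
    obtain ⟨Y, hY, -, h⟩ := CFC.exists_sqrt_of_isSelfAdjoint_of_quasispectrumRestricts
      hX.isHermitian (QuasispectrumRestricts.nnreal_of_nonneg hX.nonneg)
    exact ⟨Y, by rw [← h]; nth_rewrite 1 [← hY.star_eq]; rfl⟩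
  have := Finset.sum_mul_sq_le_sq_mul_sq Finset.univ (fun l => B l i) (fun l => B l j)
  simpa [Matrix.mul_apply, Matrix.conjTranspose_apply, sq] using this

lemma psd_diag_nonneg_s13 {p : ℕ} (X : Matrix (Fin p) (Fin p) ℝ) (hX : X.PosSemidef) (i : Fin p) :
    0 ≤ X i i := by
  have := hX.dotProduct_mulVec_nonneg (Pi.single i 1)
  simpa [dotProduct, Matrix.mulVec, Pi.single_apply] using this

lemma psd_abs_entry_le {p : ℕ} (X : Matrix (Fin p) (Fin p) ℝ) (hX : X.PosSemidef) (i j : Fin p) :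
    |X i j| ≤ (X i i + X j j) / 2 := by
  have h1 := psd_entry_sq X hX i j
  have h2 := psd_diag_nonneg_s13 X hX i
  have h3 := psd_diag_nonneg_s13 X hX j
  rw [abs_le]
  constructor <;> nlinarith [sq_nonneg (X i i - X j j),
    sq_nonneg (X i j + (X i i + X j j) / 2), sq_nonneg (X i j - (X i i + X j j) / 2)]

/-- Sandwich property of the strengthened relaxation:
P_relax ≥ P_strong ≥ P_bin. -/
theorem strengthened_relaxation_sandwich (p k : ℕ) (hk1 : 1 ≤ k) (hkp : k ≤ p)
    (S : Matrix (Fin p) (Fin p) ℝ) (hS : S.PosSemidef) :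
    sSup {v : ℝ | ∃ (z : Fin p → ℝ) (X : Matrix (Fin p) (Fin p) ℝ),
        (∀ i, 0 ≤ z i ∧ z i ≤ 1) ∧ (∑ i, z i) ≤ (k : ℝ) ∧
        X.PosSemidef ∧ X.trace = 1 ∧
        (∀ i j, |X i j| ≤ (if i = j then (1 : ℝ) else 1 / 2) * z i) ∧
        v = ∑ i, ∑ j, S i j * X i j} ≥
    sSup {v : ℝ | ∃ (z : Fin p → ℝ) (X : Matrix (Fin p) (Fin p) ℝ),
        (∀ i, 0 ≤ z i ∧ z i ≤ 1) ∧ (∑ i, z i) ≤ (k : ℝ) ∧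
        X.PosSemidef ∧ X.trace = 1 ∧
        (∀ i j, |X i j| ≤ (if i = j then (1 : ℝ) else 1 / 2) * z i) ∧
        (∀ i, ∑ j, (X i j) ^ 2 ≤ X i i * z i) ∧
        (∑ i, ∑ j, |X i j|) ≤ (k : ℝ) ∧
        v = ∑ i, ∑ j, S i j * X i j} ∧
    sSup {v : ℝ | ∃ (z : Fin p → ℝ) (X : Matrix (Fin p) (Fin p) ℝ),
        (∀ i, 0 ≤ z i ∧ z i ≤ 1) ∧ (∑ i, z i) ≤ (k : ℝ) ∧
        X.PosSemidef ∧ X.trace = 1 ∧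
        (∀ i j, |X i j| ≤ (if i = j then (1 : ℝ) else 1 / 2) * z i) ∧
        (∀ i, ∑ j, (X i j) ^ 2 ≤ X i i * z i) ∧
        (∑ i, ∑ j, |X i j|) ≤ (k : ℝ) ∧
        v = ∑ i, ∑ j, S i j * X i j} ≥
    sSup {v : ℝ | ∃ (z : Fin p → ℝ) (X : Matrix (Fin p) (Fin p) ℝ),
        (∀ i, z i = 0 ∨ z i = 1) ∧ (∑ i, z i) ≤ (k : ℝ) ∧
        X.PosSemidef ∧ X.trace = 1 ∧
        (∀ i j, |X i j| ≤ (if i = j then (1 : ℝ) else 1 / 2) * z i) ∧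
        v = ∑ i, ∑ j, S i j * X i j} := by
  have hp : 0 < p := lt_of_lt_of_le hk1 hkp
  set A := {v : ℝ | ∃ (z : Fin p → ℝ) (X : Matrix (Fin p) (Fin p) ℝ),
        (∀ i, 0 ≤ z i ∧ z i ≤ 1) ∧ (∑ i, z i) ≤ (k : ℝ) ∧
        X.PosSemidef ∧ X.trace = 1 ∧
        (∀ i j, |X i j| ≤ (if i = j then (1 : ℝ) else 1 / 2) * z i) ∧
        v = ∑ i, ∑ j, S i j * X i j} with hA
  set B := {v : ℝ | ∃ (z : Fin p → ℝ) (X : Matrix (Fin p) (Fin p) ℝ),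
        (∀ i, 0 ≤ z i ∧ z i ≤ 1) ∧ (∑ i, z i) ≤ (k : ℝ) ∧
        X.PosSemidef ∧ X.trace = 1 ∧
        (∀ i j, |X i j| ≤ (if i = j then (1 : ℝ) else 1 / 2) * z i) ∧
        (∀ i, ∑ j, (X i j) ^ 2 ≤ X i i * z i) ∧
        (∑ i, ∑ j, |X i j|) ≤ (k : ℝ) ∧
        v = ∑ i, ∑ j, S i j * X i j} with hB
  set C := {v : ℝ | ∃ (z : Fin p → ℝ) (X : Matrix (Fin p) (Fin p) ℝ),
        (∀ i, z i = 0 ∨ z i = 1) ∧ (∑ i, z i) ≤ (k : ℝ) ∧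
        X.PosSemidef ∧ X.trace = 1 ∧
        (∀ i j, |X i j| ≤ (if i = j then (1 : ℝ) else 1 / 2) * z i) ∧
        v = ∑ i, ∑ j, S i j * X i j} with hC
  -- A is bounded above
  have hAbdd : BddAbove A := by
    refine ⟨∑ i, ∑ j, |S i j|, ?_⟩
    rintro v ⟨z, X, hz, hzk, hX, htr, hM, rfl⟩
    refine Finset.sum_le_sum fun i _ => Finset.sum_le_sum fun j _ => ?_
    have hXb : |X i j| ≤ 1 := by
      refine le_trans (hM i j) ?_
      have := (hz i).1; have := (hz i).2
      split <;> nlinarith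
    calc S i j * X i j ≤ |S i j * X i j| := le_abs_self _
      _ = |S i j| * |X i j| := abs_mul _ _
      _ ≤ |S i j| * 1 := mul_le_mul_of_nonneg_left hXb (abs_nonneg _)
      _ = |S i j| := mul_one _
  -- B ⊆ A
  have hBA : B ⊆ A := by
    rintro v ⟨z, X, hz, hzk, hX, htr, hM, _, _, rfl⟩
    exact ⟨z, X, hz, hzk, hX, htr, hM, rfl⟩
  -- C ⊆ B
  have hCB : C ⊆ B := by
    rintro v ⟨z, X, hz, hzk, hX, htr, hM, rfl⟩
    have hsymm : ∀ a b, X a b = X b a := by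
      intro a b
      have := congrFun (congrFun hX.1 a) b
      simpa [Matrix.conjTranspose_apply] using this.symm
    have hz01 : ∀ i, 0 ≤ z i ∧ z i ≤ 1 := by
      intro i; rcases hz i with h | h <;> rw [h] <;> norm_num
    have hdiag : ∀ i, 0 ≤ X i i := psd_diag_nonneg_s13 X hX
    have hzero : ∀ i j, z i = 0 → X i j = 0 := by
      intro i j h0
      have := hM i j
      rw [h0, mul_zero] at this
      exact abs_nonpos_iff.mp this
    refine ⟨z, X, hz01, hzk, hX, htr, hM, ?_, ?_, rfl⟩
    · -- row sum of squares
      intro i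
      rcases hz i with h0 | h1
      · have : ∀ j, X i j = 0 := fun j => hzero i j h0
        simp [this, h0]
      · rw [h1, mul_one]
        calc ∑ j, (X i j) ^ 2 ≤ ∑ j, X i i * X j j :=
              Finset.sum_le_sum fun j _ => psd_entry_sq X hX i j
          _ = X i i * ∑ j, X j j := by rw [Finset.mul_sum]
          _ = X i i * X.trace := rfl
          _ = X i i := by rw [htr, mul_one]
    · -- total abs sum ≤ k
      have hent : ∀ i j, |X i j| ≤ z i * z j * ((X i i + X j j) / 2) := by
        intro i j
        rcases hz i with h0 | h1
        · rw [hzero i j h0, h0]; simp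
        · rcases hz j with h0' | h1'
          · rw [hsymm i j, hzero j i h0', h0']; simp
          · rw [h1, h1', one_mul, one_mul]
            exact psd_abs_entry_le X hX i j
      have hT0 : 0 ≤ ∑ i, z i := Finset.sum_nonneg fun i _ => (hz01 i).1
      have hU0 : 0 ≤ ∑ i, z i * X i i :=
        Finset.sum_nonneg fun i _ => mul_nonneg (hz01 i).1 (hdiag i)
      have hU1 : (∑ i, z i * X i i) ≤ 1 := by
        calc ∑ i, z i * X i i ≤ ∑ i, X i i :=
              Finset.sum_le_sum fun i _ => by nlinarith [(hz01 i).1, (hz01 i).2, hdiag i]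
          _ = X.trace := rfl
          _ = 1 := htr
      calc ∑ i, ∑ j, |X i j| ≤ ∑ i, ∑ j, z i * z j * ((X i i + X j j) / 2) :=
            Finset.sum_le_sum fun i _ => Finset.sum_le_sum fun j _ => hent i j
        _ = ∑ i, (z i * X i i / 2 * (∑ j, z j) + z i / 2 * (∑ j, z j * X j j)) := by
            refine Finset.sum_congr rfl fun i _ => ?_
            rw [Finset.mul_sum, Finset.mul_sum, ← Finset.sum_add_distrib]
            exact Finset.sum_congr rfl fun j _ => by ring
        _ = (∑ i, z i) * (∑ i, z i * X i i) := by
            rw [Finset.sum_add_distrib, ← Finset.sum_mul, ← Finset.sum_mul,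
              ← Finset.sum_div, ← Finset.sum_div]
            ring
        _ ≤ (k : ℝ) * 1 := mul_le_mul hzk hU1 hU0 (Nat.cast_nonneg k)
        _ = (k : ℝ) := mul_one _
  -- C is nonempty
  have hCne : C.Nonempty := by
    set i0 : Fin p := ⟨0, hp⟩ with hi0
    refine ⟨S i0 i0, (fun i => if i = i0 then 1 else 0),
      Matrix.diagonal (fun i => if i = i0 then (1 : ℝ) else 0), ?_, ?_, ?_, ?_, ?_, ?_⟩
    · intro i; by_cases h : i = i0 <;> simp [h]
    · rw [Finset.sum_ite_eq' Finset.univ i0]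
      simp only [Finset.mem_univ, if_true]
      exact_mod_cast hk1
    · exact Matrix.posSemidef_diagonal_iff.mpr fun i => by split <;> norm_num
    · rw [Matrix.trace_diagonal]
      rw [Finset.sum_ite_eq' Finset.univ i0]
      simp
    · intro i j
      rcases eq_or_ne i j with rfl | hij
      · simp only [Matrix.diagonal_apply_eq, if_pos rfl, one_mul]
        split <;> simp
      · rw [Matrix.diagonal_apply_ne _ hij]
        simp only [abs_zero, if_neg hij]
        split <;> norm_num
    · rw [← Finset.sum_product']
      rw [show (∑ x ∈ Finset.univ ×ˢ Finset.univ, S x.1 x.2 *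
          Matrix.diagonal (fun i => if i = i0 then (1:ℝ) else 0) x.1 x.2) =
          ∑ x ∈ Finset.univ ×ˢ Finset.univ,
            (if x = (i0, i0) then S i0 i0 else 0) from ?_]
      · rw [Finset.sum_ite_eq' (Finset.univ ×ˢ Finset.univ) (i0, i0)]
        simp
      · refine Finset.sum_congr rfl fun x _ => ?_
        rcases eq_or_ne x (i0, i0) with rfl | hx
        · simp [Matrix.diagonal_apply_eq]
        · rw [if_neg hx]
          rcases eq_or_ne x.1 x.2 with h12 | h12
          · have : x.1 ≠ i0 := by
              intro h1
              exact hx (Prod.ext h1 (h12 ▸ h1))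
            rw [← h12, Matrix.diagonal_apply_eq, if_neg this, mul_zero]
          · rw [Matrix.diagonal_apply_ne _ h12, mul_zero]
  have hBne : B.Nonempty := hCne.mono hCB
  exact ⟨csSup_le_csSup hAbdd hBne hBA, csSup_le_csSup (hAbdd.mono hBA) hCne hCB⟩
end

section
/- Let X ∈ ℝ^{p×p} satisfy X ⪰ 0 and tr(X) = 1, and suppose there is a set S ⊆ [p] with |S| ≤ k such that X_{i,j} = 0 unless both i ∈ S and j ∈ S. Then ∑_{i=1}^p ∑_{j=1}^p |X_{i,j}| ≤ k. -/
/-- If X ⪰ 0, tr(X) = 1 and X is supported on a set S of at most k indices,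
then the entrywise ℓ₁ norm of X is at most k. -/
theorem psd_supported_l1_bound (p k : ℕ) (hk : 1 ≤ k)
    (X : Matrix (Fin p) (Fin p) ℝ) (hX : X.PosSemidef) (htr : X.trace = 1)
    (T : Finset (Fin p)) (hT : T.card ≤ k)
    (hsupp : ∀ i j, ¬(i ∈ T ∧ j ∈ T) → X i j = 0) :
    ∑ i, ∑ j, |X i j| ≤ (k : ℝ) := by
  have hsym : ∀ i j, X j i = X i j := fun i j => hX.1.apply i j
  have hdiag : ∀ i, 0 ≤ X i i := by
    intro i
    have := hX.dotProduct_mulVec_nonneg (Pi.single i 1)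
    simpa [dotProduct_single, Matrix.mulVec_single] using this
  have key : ∀ i j, |X i j| ≤ (X i i + X j j) / 2 := by
    intro i j
    rcases eq_or_ne i j with rfl | hij
    · rw [abs_of_nonneg (hdiag i)]; linarith [hdiag i]
    · have h : ∀ c : ℝ, 0 ≤ X i i + c * X i j + c * X j i + c * c * X j j := by
        intro c
        have := hX.dotProduct_mulVec_nonneg (Pi.single i 1 + Pi.single j c)
        simp only [star_trivial, Matrix.mulVec_add, dotProduct_add,
          add_dotProduct, single_dotProduct, Matrix.mulVec_single,
          Pi.add_apply, Pi.single_apply, hij, Ne.symm hij, if_true, if_false,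
          Pi.smul_apply, op_smul_eq_mul, Matrix.col_apply] at this
        linarith [this]
      have h1 := h 1
      have h2 := h (-1)
      rw [hsym i j] at h1 h2
      rw [abs_le]
      constructor <;> nlinarith
  have hrw : ∑ i, ∑ j, |X i j| = ∑ i ∈ T, ∑ j ∈ T, |X i j| := by
    rw [← Finset.sum_subset (Finset.subset_univ T)]
    · apply Finset.sum_congr rfl
      intro i hi
      rw [← Finset.sum_subset (Finset.subset_univ T)]
      intro j _ hj
      rw [hsupp i j (fun hc => hj hc.2), abs_zero]
    · intro i _ hi
      apply Finset.sum_eq_zero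
      intro j _
      rw [hsupp i j (fun hc => hi hc.1), abs_zero]
  rw [hrw]
  have hbound : ∑ i ∈ T, ∑ j ∈ T, |X i j| ≤ ∑ i ∈ T, ∑ j ∈ T, (X i i + X j j) / 2 := by
    apply Finset.sum_le_sum; intro i _; apply Finset.sum_le_sum; intro j _; exact key i j
  have heq : ∑ i ∈ T, ∑ j ∈ T, (X i i + X j j) / 2 = (T.card : ℝ) * ∑ i ∈ T, X i i := by
    have h1 : ∀ i : Fin p, ∑ j ∈ T, (X i i + X j j) / 2
        = (T.card : ℝ) * X i i / 2 + (∑ j ∈ T, X j j) / 2 := by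
      intro i
      rw [← Finset.sum_div, Finset.sum_add_distrib, Finset.sum_const, nsmul_eq_mul,
        add_div, mul_div_assoc]
    rw [Finset.sum_congr rfl (fun i _ => h1 i), Finset.sum_add_distrib,
      Finset.sum_const, nsmul_eq_mul]
    have h2 : ∑ i ∈ T, (T.card : ℝ) * X i i / 2
        = (T.card : ℝ) * ((∑ i ∈ T, X i i) / 2) := by
      rw [Finset.sum_div, Finset.mul_sum]
      exact Finset.sum_congr rfl fun i _ => by ring
    rw [h2]
    ring
  have htrace : ∑ i ∈ T, X i i ≤ 1 := by
    have : ∑ i ∈ T, X i i ≤ ∑ i, X i i := by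
      apply Finset.sum_le_sum_of_subset_of_nonneg (Finset.subset_univ T)
      intro i _ _; exact hdiag i
    calc ∑ i ∈ T, X i i ≤ ∑ i, X i i := this
      _ = 1 := by rw [← htr]; rfl
  have hTd : ∑ i ∈ T, X i i ≥ 0 := Finset.sum_nonneg fun i _ => hdiag i
  calc ∑ i ∈ T, ∑ j ∈ T, |X i j| ≤ (T.card : ℝ) * ∑ i ∈ T, X i i := by rw [← heq]; exact hbound
    _ ≤ (k : ℝ) * 1 := by
        apply mul_le_mul (by exact_mod_cast hT) htrace hTd (by positivity)
    _ = k := mul_one _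
end
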